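/- Let (a_n) be a sequence with values in {0,1}. Suppose there exist a natural number N ≥ 1 and a set E ⊆ {1,...,N} such that for all indices i_1 < i_2 < ... < i_N, it is not the case that (a_{i_j} = 1 for all j ∈ E and a_{i_j} = 0 for all j ∈ {1,...,N} \ E). Then the number of alternations of the sequence is bounded: ∑_{n=1}^∞ |a_n − a_{n+1}| ≤ 2N. -/
import Mathlib


open Finset

/-- If a 0-1 sequence omits some fixed pattern of length `N` (prescribed by `E`)
along every increasing tuple of indices, then its total variation is at most `2N`. -/
theorem stmt_0 (a : ℕ → ℝ) (ha : ∀ n, a n = 0 ∨ a n = 1)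
    (N : ℕ) (hN : 1 ≤ N) (E : Finset (Fin N))
    (hpat : ∀ i : Fin N → ℕ, StrictMono i →
      ¬ (∀ j : Fin N, (j ∈ E → a (i j) = 1) ∧ (j ∉ E → a (i j) = 0))) :
    ∀ K : ℕ, ∑ n ∈ Finset.range K, |a n - a (n + 1)| ≤ 2 * N := by
  intro K
  by_contra hc
  push_neg at hc
  set S : Finset ℕ := (Finset.range K).filter (fun n => ¬ (a n = a (n+1))) with hS
  have hsum : ∑ n ∈ Finset.range K, |a n - a (n + 1)| = S.card := by
    rw [hS, ← Finset.sum_boole]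
    refine Finset.sum_congr rfl fun n _ => ?_
    rcases ha n with h1 | h1 <;> rcases ha (n+1) with h2 | h2 <;>
      simp [h1, h2] <;> norm_num
  have hcard : 2 * N ≤ S.card := by
    have h2 : (2 * N : ℝ) < S.card := by rw [← hsum]; exact hc
    exact_mod_cast h2.le
  set g : Fin (2 * N) ↪o ℕ := S.orderEmbOfCardLe hcard with hg
  have hgmem : ∀ j : Fin (2 * N), g j ∈ S := fun j => S.orderEmbOfCardLe_mem hcard j
  set m : Fin N → ℕ := fun j => g ⟨2 * j.val, by have := j.isLt; omega⟩ with hm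
  have halt : ∀ j : Fin N, ¬ (a (m j) = a (m j + 1)) := by
    intro j
    have := hgmem ⟨2 * j.val, by have := j.isLt; omega⟩
    rw [hS, Finset.mem_filter] at this
    exact this.2
  have hmono : ∀ j j' : Fin N, j < j' → m j + 1 < m j' := by
    intro j j' h
    have hj' := j'.isLt
    have hlt : (j : ℕ) < j' := h
    have h1 : g ⟨2 * j.val, by omega⟩ < g ⟨2 * j.val + 1, by omega⟩ :=
      g.strictMono (by simp [Fin.lt_def])
    have h2 : g ⟨2 * j.val + 1, by omega⟩ < g ⟨2 * j'.val, by omega⟩ :=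
      g.strictMono (by simp [Fin.lt_def]; omega)
    simp only [hm]
    omega
  set t : Fin N → ℝ := fun j => if j ∈ E then 1 else 0 with ht
  set i : Fin N → ℕ := fun j => if a (m j) = t j then m j else m j + 1 with hi
  have hval : ∀ j : Fin N, a (i j) = t j := by
    intro j
    by_cases h : a (m j) = t j
    · simp [hi, h]
    · simp only [hi, if_neg h]
      rcases ha (m j) with h1 | h1 <;> rcases ha (m j + 1) with h2 | h2 <;>
        by_cases hE : j ∈ E <;>
        first
          | exact absurd (h1.trans h2.symm) (halt j)
          | (rw [h2]; simp only [ht]; rw [ht] at h; rw [h1] at h; simp [hE] at h ⊢)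
  have himono : StrictMono i := by
    intro j j' h
    have := hmono j j' h
    simp only [hi]
    split_ifs <;> omega
  exact hpat i himono (fun j => ⟨fun hE => by rw [hval j, ht]; simp [hE],
    fun hE => by rw [hval j, ht]; simp [hE]⟩)
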